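/- The hypercube graph Q_n (n ≥ 1) has constant resistance curvature K, where κ_i = K for all vertices solves Ω κ = 1 and K satisfies 1/K = Σ_{k=1}^{n} (1/k)·C(n,k), with C(n,k) the binomial coefficient. -/

import Mathlib

open Finset SimpleGraph Matrix

/-- The resistance matrix of a graph: `Ω i j = Γ⁻¹ i i + Γ⁻¹ j j - 2 Γ⁻¹ i j`
where `Γ = L + (1/N) J` with `L` the Laplacian and `J` the all-ones matrix. -/
noncomputable def resistanceMatrix {V : Type*} [Fintype V] [DecidableEq V]
    (G : SimpleGraph V) [DecidableRel G.Adj] : Matrix V V ℝ :=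
  Matrix.of fun i j =>
    letI Γinv := (G.lapMatrix ℝ + Matrix.of fun _ _ => (1 : ℝ) / Fintype.card V)⁻¹
    Γinv i i + Γinv j j - 2 * Γinv i j

/-- The hypercube graph `Q n`: vertices are `{0,1}ⁿ`, with edges between vertices at
Hamming distance `1`. -/
def hypercubeGraph (n : ℕ) : SimpleGraph (Fin n → ZMod 2) where
  Adj x y := hammingDist x y = 1
  symm := ⟨fun x y h => (hammingDist_comm y x).trans h⟩
  loopless := ⟨fun x h => by simp [hammingDist_self] at h⟩

instance (n : ℕ) : DecidableRel (hypercubeGraph n).Adj :=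
  fun x y => inferInstanceAs (Decidable (hammingDist x y = 1))

namespace HCube
variable {n : ℕ}

abbrev V (n : ℕ) := Fin n → ZMod 2

noncomputable def sgn (z : ZMod 2) : ℝ := if z = 0 then 1 else -1

lemma sgn_add (a b : ZMod 2) : sgn (a + b) = sgn a * sgn b := by
  rcases (show ∀ a : ZMod 2, a = 0 ∨ a = 1 by decide) a with rfl | rfl <;>
    rcases (show ∀ a : ZMod 2, a = 0 ∨ a = 1 by decide) b with rfl | rfl <;> norm_num [sgn] <;> decide

noncomputable def chi (S x : V n) : ℝ := ∏ i, sgn (S i * x i)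

lemma chi_zero_right (S : V n) : chi S 0 = 1 := by simp [chi, sgn]
lemma chi_zero_left (x : V n) : chi 0 x = 1 := by simp [chi, sgn]

lemma chi_add_right (S x y : V n) : chi S (x + y) = chi S x * chi S y := by
  rw [chi, chi, chi, ← Finset.prod_mul_distrib]
  exact Finset.prod_congr rfl fun i _ => by rw [Pi.add_apply, mul_add, sgn_add]

lemma chi_comm (S x : V n) : chi S x = chi x S := by
  simp [chi, mul_comm]

lemma sum_sgn_mul (a : ZMod 2) : ∑ z : ZMod 2, sgn (a * z) = if a = 0 then 2 else 0 := by
  rw [show (univ : Finset (ZMod 2)) = {0, 1} by decide,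
    Finset.sum_pair (by decide : (0 : ZMod 2) ≠ 1)]
  rcases (show ∀ a : ZMod 2, a = 0 ∨ a = 1 by decide) a with rfl | rfl <;> norm_num [sgn]

lemma sum_chi_right (S : V n) : ∑ x : V n, chi S x = if S = 0 then (2 ^ n : ℝ) else 0 := by
  have h : ∑ x : V n, chi S x = ∏ i, ∑ z : ZMod 2, sgn (S i * z) := by
    rw [Finset.prod_univ_sum]
    rw [Fintype.piFinset_univ]
    rfl
  rw [h]
  by_cases hS : S = 0
  · simp [hS, sum_sgn_mul, sgn]
  · obtain ⟨i, hi⟩ : ∃ i, S i ≠ 0 := by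
      by_contra hc; push_neg at hc; exact hS (funext fun i => hc i)
    rw [if_neg hS]
    exact Finset.prod_eq_zero (Finset.mem_univ i) (by rw [sum_sgn_mul, if_neg hi])

lemma sum_chi_left (x : V n) : ∑ S : V n, chi S x = if x = 0 then (2 ^ n : ℝ) else 0 := by
  rw [Finset.sum_congr rfl fun S _ => chi_comm S x]; exact sum_chi_right x

lemma sum_chi_mul (x y : V n) :
    ∑ S : V n, chi S x * chi S y = if x = y then (2 ^ n : ℝ) else 0 := by
  simp_rw [← chi_add_right]
  rw [Finset.sum_congr rfl fun S _ => chi_comm S (x+y), sum_chi_right (x + y)]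
  congr 1
  simp only [eq_iff_iff, funext_iff, Pi.add_apply, Pi.zero_apply]
  have key : ∀ a b : ZMod 2, a + b = 0 ↔ a = b := by decide
  exact forall_congr' fun i => key (x i) (y i)

noncomputable def e (n : ℕ) (i : Fin n) : V n := Pi.single i 1

lemma e_injective : Function.Injective (e n) := by
  intro i j h
  by_contra hij
  have := congrFun h i
  rw [e, e, Pi.single_eq_same, Pi.single_eq_of_ne hij] at this
  exact one_ne_zero this

lemma chi_e (S : V n) (i : Fin n) : chi S (e n i) = sgn (S i) := by
  rw [chi]
  rw [Finset.prod_eq_single i]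
  · rw [e, Pi.single_eq_same, mul_one]
  · intro j _ hj; rw [e, Pi.single_eq_of_ne hj, mul_zero, sgn, if_pos rfl]
  · intro h; exact absurd (Finset.mem_univ i) h

lemma adj_iff (x y : V n) : (hypercubeGraph n).Adj x y ↔ ∃ i, y = x + e n i := by
  have key2 : ∀ a b : ZMod 2, a ≠ b → b = a + 1 := by decide
  constructor
  · intro h
    change hammingDist x y = 1 at h
    rw [hammingDist, Finset.card_eq_one] at h
    obtain ⟨i, hi⟩ := h
    refine ⟨i, funext fun j => ?_⟩
    by_cases hj : j = i
    · subst hj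
      have : j ∈ ({j} : Finset (Fin n)) := Finset.mem_singleton_self j
      rw [← hi] at this
      simp only [Finset.mem_filter] at this
      rw [Pi.add_apply, e, Pi.single_eq_same]
      exact key2 _ _ this.2
    · have : j ∉ ({i} : Finset (Fin n)) := by simp [hj]
      rw [← hi] at this
      simp only [Finset.mem_filter, Finset.mem_univ, true_and, not_not] at this
      rw [Pi.add_apply, e, Pi.single_eq_of_ne hj, add_zero, this]
  · rintro ⟨i, rfl⟩
    change hammingDist x (x + e n i) = 1
    rw [hammingDist]
    have : ({j | x j ≠ (x + e n i) j} : Finset (Fin n)) = {i} := by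
      ext j
      simp only [Finset.mem_filter, Finset.mem_univ, true_and, Finset.mem_singleton,
        Pi.add_apply]
      by_cases hj : j = i
      · subst hj
        have h1 : ∀ a : ZMod 2, a ≠ a + 1 := by decide
        simp [e, Pi.single_eq_same, h1 (x j)]
      · simp [e, Pi.single_eq_of_ne hj, hj]
    rw [this, Finset.card_singleton]

lemma neighborFinset_eq (x : V n) :
    (hypercubeGraph n).neighborFinset x = Finset.image (fun i => x + e n i) Finset.univ := by
  ext y
  simp only [mem_neighborFinset, adj_iff, Finset.mem_image, Finset.mem_univ, true_and]
  exact exists_congr fun i => eq_comm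

lemma degree_eq (x : V n) : (hypercubeGraph n).degree x = n := by
  rw [SimpleGraph.degree, neighborFinset_eq,
    Finset.card_image_of_injective _ (fun i j h => e_injective (by
      have := h; simpa using add_left_cancel this))]
  simp

lemma sum_neighbors (x : V n) (g : V n → ℝ) :
    ∑ y ∈ (hypercubeGraph n).neighborFinset x, g y = ∑ i, g (x + e n i) := by
  rw [neighborFinset_eq, Finset.sum_image]
  intro i _ j _ h
  exact e_injective (add_left_cancel h)

lemma sum_sgn (S : V n) : ∑ i, sgn (S i) = (n : ℝ) - 2 * hammingNorm S := by
  have h : ∀ z : ZMod 2, sgn z = 1 - 2 * (if z ≠ 0 then (1 : ℝ) else 0) := by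
    intro z; rcases (show ∀ a : ZMod 2, a = 0 ∨ a = 1 by decide) z with rfl | rfl <;> norm_num [sgn]
  simp_rw [h]
  rw [Finset.sum_sub_distrib, Finset.sum_const, ← Finset.mul_sum, Finset.sum_boole]
  simp [hammingNorm]

noncomputable def coef (S : V n) : ℝ := if S = 0 then 1 else 1 / (2 * hammingNorm S)

noncomputable def M (n : ℕ) : Matrix (V n) (V n) ℝ :=
  Matrix.of fun x y => (2 ^ n : ℝ)⁻¹ * ∑ S : V n, coef S * (chi S x * chi S y)

lemma card_V : (Fintype.card (V n) : ℝ) = 2 ^ n := by simp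

lemma lap_row (x : V n) (S : V n) :
    ∑ z, (hypercubeGraph n).lapMatrix ℝ x z * chi S z =
      (2 * hammingNorm S) * chi S x := by
  have h : ∑ z, (hypercubeGraph n).lapMatrix ℝ x z * chi S z =
      ((hypercubeGraph n).lapMatrix ℝ *ᵥ fun z => chi S z) x := by
    simp [Matrix.mulVec, dotProduct]
  rw [h, lapMatrix_mulVec_apply, degree_eq, sum_neighbors]
  simp_rw [chi_add_right, chi_e]
  rw [← Finset.mul_sum, sum_sgn]
  ring

lemma sum_M_col (y : V n) : ∑ z, M n z y = 1 := by
  simp only [M, Matrix.of_apply]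
  rw [← Finset.mul_sum, Finset.sum_comm]
  have h : ∀ S : V n, ∑ z, coef S * (chi S z * chi S y) =
      coef S * chi S y * ∑ z, chi S z := by
    intro S; rw [Finset.mul_sum]; exact Finset.sum_congr rfl fun z _ => by ring
  rw [Finset.sum_congr rfl fun S _ => h S]
  rw [Finset.sum_eq_single 0]
  · rw [sum_chi_right, if_pos rfl, coef, if_pos rfl, chi_zero_left]
    simp
  · intro S _ hS; rw [sum_chi_right, if_neg hS, mul_zero]
  · intro h; exact absurd (Finset.mem_univ 0) h

lemma Gamma_mul_M :
    ((hypercubeGraph n).lapMatrix ℝ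
      + Matrix.of fun _ _ => (1 : ℝ) / Fintype.card (V n)) * M n = 1 := by
  ext x y
  rw [Matrix.mul_apply]
  simp only [Matrix.add_apply, Matrix.of_apply, add_mul]
  rw [Finset.sum_add_distrib]
  have hT2 : ∑ z, (1 : ℝ) / Fintype.card (V n) * M n z y = (2 ^ n : ℝ)⁻¹ := by
    rw [← Finset.mul_sum, sum_M_col, mul_one, one_div, card_V]
  have key : ∀ S : V n, coef S * (2 * (hammingNorm S : ℝ)) = if S = 0 then 0 else 1 := by
    intro S
    by_cases hS : S = 0
    · simp [hS, coef, hammingNorm_eq_zero.mpr rfl]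
    · have hw : (hammingNorm S : ℝ) ≠ 0 := by
        exact_mod_cast fun h => hS (hammingNorm_eq_zero.mp (by exact_mod_cast h))
      rw [coef, if_neg hS, if_neg hS]
      field_simp
  have hT1 : ∑ z, (hypercubeGraph n).lapMatrix ℝ x z * M n z y =
      (2 ^ n : ℝ)⁻¹ * ((if x = y then (2 ^ n : ℝ) else 0) - 1) := by
    simp only [M, Matrix.of_apply]
    calc ∑ z, (hypercubeGraph n).lapMatrix ℝ x z *
          ((2 ^ n : ℝ)⁻¹ * ∑ S : V n, coef S * (chi S z * chi S y))
        = (2 ^ n : ℝ)⁻¹ * ∑ S : V n, coef S * chi S y *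
            (∑ z, (hypercubeGraph n).lapMatrix ℝ x z * chi S z) := by
          simp_rw [Finset.mul_sum]
          rw [Finset.sum_comm]
          exact Finset.sum_congr rfl fun S _ => Finset.sum_congr rfl fun z _ => by ring
      _ = (2 ^ n : ℝ)⁻¹ * ∑ S : V n, (coef S * (2 * (hammingNorm S : ℝ)))
            * (chi S x * chi S y) := by
          congr 1
          refine Finset.sum_congr rfl fun S _ => ?_
          rw [lap_row]
          ring
      _ = (2 ^ n : ℝ)⁻¹ * ∑ S : V n, (if S = 0 then 0 else 1) * (chi S x * chi S y) := by
          simp_rw [key]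
      _ = (2 ^ n : ℝ)⁻¹ * ((∑ S : V n, chi S x * chi S y) - chi 0 x * chi 0 y) := by
          congr 1
          have : ∀ S : V n, (if S = 0 then (0:ℝ) else 1) * (chi S x * chi S y)
              = chi S x * chi S y - (if S = 0 then chi S x * chi S y else 0) := by
            intro S; by_cases hS : S = 0 <;> simp [hS]
          simp_rw [this]
          rw [Finset.sum_sub_distrib, Finset.sum_ite_eq' Finset.univ 0
            (fun S => chi S x * chi S y), if_pos (Finset.mem_univ 0)]
      _ = (2 ^ n : ℝ)⁻¹ * ((if x = y then (2 ^ n : ℝ) else 0) - 1) := by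
          rw [sum_chi_mul, chi_zero_left, chi_zero_left, one_mul]
  rw [hT1, hT2, Matrix.one_apply]
  by_cases hxy : x = y <;> simp [hxy] <;> field_simp <;> ring

lemma M_symm (x y : V n) : M n x y = M n y x := by
  simp only [M, Matrix.of_apply]
  congr 1
  exact Finset.sum_congr rfl fun S _ => by ring

lemma sum_M_row (x : V n) : ∑ y, M n x y = 1 := by
  rw [Finset.sum_congr rfl fun y _ => M_symm x y]
  exact sum_M_col x

lemma M_diag (x : V n) : M n x x = (2 ^ n : ℝ)⁻¹ * ∑ S : V n, coef S := by
  simp only [M, Matrix.of_apply]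
  congr 1
  refine Finset.sum_congr rfl fun S _ => ?_
  have hx : x + x = 0 := funext fun i => by
    have : ∀ a : ZMod 2, a + a = 0 := by decide
    exact this (x i)
  rw [← chi_add_right, hx, chi_zero_right, mul_one]

noncomputable def hfun (k : ℕ) : ℝ := if k = 0 then 1 else 1 / (2 * k)

lemma coef_eq_hfun (S : V n) : coef S = hfun (hammingNorm S) := by
  by_cases hS : S = 0
  · simp [hS, coef, hfun, hammingNorm_eq_zero.mpr rfl]
  · rw [coef, if_neg hS, hfun, if_neg (fun h => hS (hammingNorm_eq_zero.mp h))]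

def ind (n : ℕ) (A : Finset (Fin n)) : V n := fun i => if i ∈ A then 1 else 0

lemma hammingNorm_ind (A : Finset (Fin n)) : hammingNorm (ind n A) = A.card := by
  rw [hammingNorm]
  congr 1
  ext i
  simp only [Finset.mem_filter, Finset.mem_univ, true_and, ind]
  by_cases hi : i ∈ A <;> simp [hi]

lemma ind_filter (S : V n) : ind n (Finset.filter (fun i => S i = 1) Finset.univ) = S := by
  funext i
  simp only [ind, Finset.mem_filter, Finset.mem_univ, true_and]
  by_cases h : S i = 1
  · simp [h]
  · have h0 : S i = 0 := by
      have : ∀ a : ZMod 2, a ≠ 1 → a = 0 := by decide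
      exact this _ h
    simp [h, h0]

lemma filter_ind (A : Finset (Fin n)) :
    Finset.filter (fun i => ind n A i = 1) Finset.univ = A := by
  ext i
  simp only [Finset.mem_filter, Finset.mem_univ, true_and, ind]
  by_cases hi : i ∈ A <;> simp [hi]

lemma sum_over_V (f : V n → ℝ) : ∑ S : V n, f S = ∑ A : Finset (Fin n), f (ind n A) := by
  refine Finset.sum_nbij' (fun S => Finset.filter (fun i => S i = 1) Finset.univ) (ind n)
    (fun _ _ => Finset.mem_univ _) (fun _ _ => Finset.mem_univ _)
    (fun S _ => ind_filter S) (fun A _ => filter_ind A)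
    (fun S _ => by rw [ind_filter])

lemma sum_coef_eq : ∑ S : V n, coef S
    = ∑ k ∈ Finset.range (n + 1), (n.choose k : ℝ) * hfun k := by
  rw [Finset.sum_congr rfl fun S _ => coef_eq_hfun S,
    sum_over_V (fun S => hfun (hammingNorm S))]
  simp_rw [hammingNorm_ind]
  have h := Finset.sum_powerset_apply_card (f := fun k => hfun k)
    (x := (Finset.univ : Finset (Fin n)))
  rw [Finset.powerset_univ] at h
  rw [h]
  simp [Finset.card_univ, nsmul_eq_mul]

lemma two_T_sub_two (hn : 1 ≤ n) : 2 * (∑ S : V n, coef S) - 2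
    = ∑ k ∈ Finset.Icc 1 n, (1 / (k : ℝ)) * (n.choose k : ℝ) := by
  rw [sum_coef_eq]
  have hsplit : Finset.range (n + 1) = insert 0 (Finset.Icc 1 n) := by
    ext k; simp [Nat.lt_succ_iff]; omega
  rw [hsplit, Finset.sum_insert (by simp)]
  have h0 : (n.choose 0 : ℝ) * hfun 0 = 1 := by simp [hfun]
  rw [h0, mul_add, mul_one, add_sub_cancel_left, Finset.mul_sum]
  refine Finset.sum_congr rfl fun k hk => ?_
  rw [Finset.mem_Icc] at hk
  have hk0 : (k : ℝ) ≠ 0 := by exact_mod_cast Nat.one_le_iff_ne_zero.mp hk.1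
  rw [hfun, if_neg (Nat.one_le_iff_ne_zero.mp hk.1)]
  field_simp

end HCube

/-- The hypercube graph `Q n` has constant resistance curvature `K` with
`1/K = ∑_{k=1}^{n} (1/k) · C(n,k)`. -/
theorem hypercubeGraph_constant_curvature (n : ℕ) (hn : 1 ≤ n) :
    ∃ K : ℝ,
      resistanceMatrix (hypercubeGraph n) *ᵥ (fun _ => K) = (fun _ => 1) ∧
      1 / K = ∑ k ∈ Finset.Icc 1 n, (1 / (k : ℝ)) * (n.choose k : ℝ) := by
  classical
  set R : ℝ := ∑ k ∈ Finset.Icc 1 n, (1 / (k : ℝ)) * (n.choose k : ℝ) with hR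
  have hRpos : 0 < R := by
    refine Finset.sum_pos (fun k hk => ?_) ⟨1, Finset.mem_Icc.mpr ⟨le_refl 1, hn⟩⟩
    rw [Finset.mem_Icc] at hk
    have h1 : 0 < (k : ℝ) := by exact_mod_cast hk.1
    have h2 : 0 < (n.choose k : ℝ) := by exact_mod_cast Nat.choose_pos hk.2
    positivity
  refine ⟨1 / R, ?_, by rw [one_div_one_div]⟩
  funext x
  have hinv : ((hypercubeGraph n).lapMatrix ℝ
      + Matrix.of fun _ _ => (1 : ℝ) / Fintype.card (Fin n → ZMod 2))⁻¹ = HCube.M n :=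
    Matrix.inv_eq_right_inv HCube.Gamma_mul_M
  show ∑ y, resistanceMatrix (hypercubeGraph n) x y * (1 / R) = 1
  have hres : ∀ y, resistanceMatrix (hypercubeGraph n) x y
      = HCube.M n x x + HCube.M n y y - 2 * HCube.M n x y := by
    intro y
    simp only [resistanceMatrix, Matrix.of_apply]
    rw [hinv]
  simp_rw [hres]
  set T : ℝ := ∑ S : HCube.V n, HCube.coef S with hT
  have hN : ((Fintype.card (HCube.V n) : ℕ) : ℝ) = 2 ^ n := HCube.card_V
  have hdiag : ∀ y : HCube.V n, HCube.M n y y = (2 ^ n : ℝ)⁻¹ * T := fun y => HCube.M_diag y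
  have hsum1 : ∑ y : HCube.V n, HCube.M n x x = T := by
    rw [Finset.sum_const, Finset.card_univ, nsmul_eq_mul, hdiag x, hN, ← mul_assoc,
      mul_inv_cancel₀ (by positivity : (2 ^ n : ℝ) ≠ 0), one_mul]
  have hsum2 : ∑ y : HCube.V n, HCube.M n y y = T := by
    rw [Finset.sum_congr rfl fun y _ => hdiag y, Finset.sum_const, Finset.card_univ,
      nsmul_eq_mul, hN, ← mul_assoc,
      mul_inv_cancel₀ (by positivity : (2 ^ n : ℝ) ≠ 0), one_mul]
  have hsum3 : ∑ y : HCube.V n, HCube.M n x y = 1 := HCube.sum_M_row x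
  rw [← Finset.sum_mul, Finset.sum_sub_distrib, Finset.sum_add_distrib, hsum1, hsum2,
    ← Finset.mul_sum, hsum3]
  have h2T : T + T - 2 * 1 = R := by
    rw [hR, ← HCube.two_T_sub_two hn, hT]; ring
  rw [h2T]
  field_simp
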